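/- Let (a_{n,λ}) and (b_{n,λ}) be sequences of real numbers. Then a_{n,λ} = ∑_{k=0}^{n} C(n,k)·(1)_{n−k,λ}·b_{k,λ} holds for all n ≥ 0 if and only if b_{n,λ} = ∑_{k=0}^{n} C(n,k)·(−1)^{n−k}·⟨1⟩_{n−k,λ}·a_{k,λ} holds for all n ≥ 0. -/

import Mathlib

open Finset

noncomputable def dff (lam x : ℝ) (n : ℕ) : ℝ := ∏ i ∈ Finset.range n, (x - i * lam)

noncomputable def drf (lam x : ℝ) (n : ℕ) : ℝ := ∏ i ∈ Finset.range n, (x + i * lam)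

lemma dff_zero (lam x : ℝ) : dff lam x 0 = 1 := by simp [dff]

lemma dff_succ (lam x : ℝ) (n : ℕ) : dff lam x (n + 1) = dff lam x n * (x - n * lam) := by
  simp [dff, prod_range_succ]

lemma dff_vandermonde (lam x y : ℝ) (m : ℕ) :
    ∑ k ∈ Finset.range (m + 1),
      (Nat.choose m k : ℝ) * dff lam x k * dff lam y (m - k) = dff lam (x + y) m := by
  induction m with
  | zero => simp [dff_zero]
  | succ m ih =>
    rw [Finset.sum_range_succ']
    have h1 : ∀ k ∈ Finset.range (m + 1),
        (Nat.choose (m + 1) (k + 1) : ℝ) * dff lam x (k + 1) * dff lam y (m + 1 - (k + 1)) =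
        (Nat.choose m k : ℝ) * dff lam x (k + 1) * dff lam y (m - k) +
        (Nat.choose m (k + 1) : ℝ) * dff lam x (k + 1) * dff lam y (m - k) := by
      intro k hk
      have e : m + 1 - (k + 1) = m - k := by omega
      rw [e, Nat.choose_succ_succ]
      push_cast [Nat.succ_eq_add_one]
      ring
    rw [Finset.sum_congr rfl h1, Finset.sum_add_distrib, add_assoc]
    have hA : ∑ k ∈ Finset.range (m + 2),
        (Nat.choose m k : ℝ) * dff lam x k * dff lam y (m + 1 - k) =
        (∑ k ∈ Finset.range (m + 1),
          (Nat.choose m (k + 1) : ℝ) * dff lam x (k + 1) * dff lam y (m - k)) +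
        (Nat.choose (m + 1) 0 : ℝ) * dff lam x 0 * dff lam y (m + 1 - 0) := by
      rw [Finset.sum_range_succ']
      congr 1
      · apply Finset.sum_congr rfl
        intro k hk
        have e : m + 1 - (k + 1) = m - k := by omega
        rw [e]
      · simp
    have hB : ∑ k ∈ Finset.range (m + 2),
        (Nat.choose m k : ℝ) * dff lam x k * dff lam y (m + 1 - k) =
        ∑ k ∈ Finset.range (m + 1),
          (Nat.choose m k : ℝ) * dff lam x k * dff lam y (m + 1 - k) := by
      rw [Finset.sum_range_succ, Nat.choose_succ_self]
      simp
    rw [hA.symm.trans hB]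
    have h3 : ∀ k ∈ Finset.range (m + 1),
        (Nat.choose m k : ℝ) * dff lam x (k + 1) * dff lam y (m - k) +
        (Nat.choose m k : ℝ) * dff lam x k * dff lam y (m + 1 - k) =
        ((Nat.choose m k : ℝ) * dff lam x k * dff lam y (m - k)) * (x + y - m * lam) := by
      intro k hk
      have hkm : k ≤ m := by simpa [Nat.lt_succ_iff] using hk
      have e1 : m + 1 - k = (m - k) + 1 := by omega
      rw [e1, dff_succ, dff_succ]
      have e2 : ((m - k : ℕ) : ℝ) = (m : ℝ) - k := by
        push_cast [hkm]; ring
      rw [e2]; ring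
    rw [← Finset.sum_add_distrib, Finset.sum_congr rfl h3, ← Finset.sum_mul, ih, dff_succ]

lemma dff_neg_one (lam : ℝ) (m : ℕ) :
    dff lam (-1) m = (-1 : ℝ) ^ m * drf lam 1 m := by
  unfold dff drf
  have h : (-1 : ℝ) ^ m * ∏ i ∈ Finset.range m, ((1 : ℝ) + i * lam) =
      ∏ i ∈ Finset.range m, ((-1 : ℝ) * (1 + i * lam)) := by
    rw [Finset.prod_mul_distrib, Finset.prod_const, Finset.card_range]
  rw [h]
  apply Finset.prod_congr rfl
  intro i _
  ring

lemma orth (lam x y : ℝ) (hxy : x + y = 0) (m : ℕ) :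
    ∑ j ∈ Finset.range (m + 1), (Nat.choose m j : ℝ) * dff lam x j * dff lam y (m - j) =
      if m = 0 then 1 else 0 := by
  rw [dff_vandermonde, hxy]
  cases m with
  | zero => simp [dff_zero]
  | succ m =>
    simp only [Nat.succ_ne_zero, if_false]
    unfold dff
    apply Finset.prod_eq_zero (Finset.mem_range.2 (Nat.succ_pos m))
    simp

lemma inversion (f g : ℕ → ℝ)
    (h0 : ∀ m : ℕ, ∑ j ∈ Finset.range (m + 1), (Nat.choose m j : ℝ) * f j * g (m - j) =
      if m = 0 then 1 else 0)
    (a b : ℕ → ℝ)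
    (ha : ∀ n : ℕ, a n = ∑ k ∈ Finset.range (n + 1),
        (Nat.choose n k : ℝ) * f (n - k) * b k) :
    ∀ n : ℕ, b n = ∑ k ∈ Finset.range (n + 1), (Nat.choose n k : ℝ) * g (n - k) * a k := by
  intro n
  have step1 : ∑ k ∈ Finset.range (n + 1), (Nat.choose n k : ℝ) * g (n - k) * a k =
      ∑ k ∈ Finset.range (n + 1), ∑ j ∈ Finset.range (k + 1),
        (Nat.choose n k : ℝ) * g (n - k) * ((Nat.choose k j : ℝ) * f (k - j) * b j) := by
    apply Finset.sum_congr rfl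
    intro k _
    rw [ha k, Finset.mul_sum]
  rw [step1]
  rw [Finset.sum_comm' (t' := Finset.range (n + 1)) (s' := fun j => Finset.Ico j (n + 1))
    (by intro x y; simp [Nat.lt_succ_iff, Finset.mem_Ico]; omega)]
  have step2 : ∀ j ∈ Finset.range (n + 1),
      (∑ k ∈ Finset.Ico j (n + 1),
        (Nat.choose n k : ℝ) * g (n - k) * ((Nat.choose k j : ℝ) * f (k - j) * b j)) =
      (Nat.choose n j : ℝ) * b j * (if n - j = 0 then 1 else 0) := by
    intro j hj
    have hjn : j ≤ n := by simpa [Nat.lt_succ_iff] using hj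
    rw [Finset.sum_Ico_eq_sum_range]
    have e0 : n + 1 - j = (n - j) + 1 := by omega
    rw [e0, ← h0 (n - j), Finset.mul_sum]
    apply Finset.sum_congr rfl
    intro i hi
    have hin : i ≤ n - j := by simpa [Nat.lt_succ_iff] using hi
    have hc : (Nat.choose n (j + i) : ℝ) * (Nat.choose (j + i) j : ℝ) =
        (Nat.choose n j : ℝ) * (Nat.choose (n - j) i : ℝ) := by
      rw [← Nat.cast_mul, ← Nat.cast_mul,
        Nat.choose_mul (Nat.le_add_right j i)]
      simp
    have e1 : j + i - j = i := by omega
    have e2 : n - (j + i) = (n - j) - i := by omega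
    rw [e1, e2]
    calc (Nat.choose n (j + i) : ℝ) * g (n - j - i) * ((Nat.choose (j + i) j : ℝ) * f i * b j)
        = ((Nat.choose n (j + i) : ℝ) * (Nat.choose (j + i) j : ℝ)) *
            (g (n - j - i) * f i * b j) := by ring
      _ = ((Nat.choose n j : ℝ) * (Nat.choose (n - j) i : ℝ)) *
            (g (n - j - i) * f i * b j) := by rw [hc]
      _ = (Nat.choose n j : ℝ) * b j *
            ((Nat.choose (n - j) i : ℝ) * f i * g (n - j - i)) := by ring
  rw [Finset.sum_congr rfl step2]
  rw [Finset.sum_eq_single n]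
  · simp
  · intro j hj hjn
    have : n - j ≠ 0 := by
      simp only [Finset.mem_range, Nat.lt_succ_iff] at hj
      omega
    simp [this]
  · intro h; exact absurd (Finset.self_mem_range_succ n) h

theorem stmt3 (lam : ℝ) (hlam : lam ≠ 0) (a b : ℕ → ℝ) :
    (∀ n : ℕ, a n = ∑ k ∈ Finset.range (n + 1),
        (Nat.choose n k : ℝ) * dff lam 1 (n - k) * b k) ↔
    (∀ n : ℕ, b n = ∑ k ∈ Finset.range (n + 1),
        (Nat.choose n k : ℝ) * (-1 : ℝ) ^ (n - k) * drf lam 1 (n - k) * a k) := by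
  constructor
  · intro h n
    have key := inversion (fun m => dff lam 1 m) (fun m => dff lam (-1) m)
      (orth lam 1 (-1) (by ring)) a b h n
    rw [key]
    refine Finset.sum_congr rfl fun k _ => ?_
    show (Nat.choose n k : ℝ) * dff lam (-1) (n - k) * a k = _
    rw [dff_neg_one]
    ring
  · intro h n
    have hb : ∀ n : ℕ, b n = ∑ k ∈ Finset.range (n + 1),
        (Nat.choose n k : ℝ) * (fun m => dff lam (-1) m) (n - k) * a k := by
      intro n
      rw [h n]
      refine Finset.sum_congr rfl fun k _ => ?_
      show _ = (Nat.choose n k : ℝ) * dff lam (-1) (n - k) * a k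
      rw [dff_neg_one]
      ring
    exact inversion (fun m => dff lam (-1) m) (fun m => dff lam 1 m)
      (orth lam (-1) 1 (by ring)) b a hb n
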